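/- Suppose |Ψ⟩ ∈ ⊗_{x=1}^{L} ℂ^q is a simultaneous eigenvector of the cyclic shift T and of the total charge N̂ = Σ_x n̂_x with eigenvalue N satisfying N/L ∉ ℤ. Then the state U|Ψ⟩, with U = exp(i(2π/L) Σ_x x n̂_x), is a T-eigenvector whose eigenvalue differs from that of |Ψ⟩ by the nontrivial phase e^{i2πN/L} ≠ 1; in particular ⟨Ψ|U|Ψ⟩ = 0. -/

import Mathlib

open Matrix Complex

/-- The cyclic coordinate shift: `(shiftIdx L q g) i = g (i+1 mod L)`. -/
def shiftIdx (L q : ℕ) (g : Fin L → Fin q) : Fin L → Fin q :=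
  fun i => g ⟨(i.val + 1) % L, Nat.mod_lt _ (Nat.lt_of_le_of_lt (Nat.zero_le _) i.isLt)⟩

/-- The translation (cyclic shift) unitary on `(ℂ^q)^{⊗L}` (the convention shifting basis
labels by one site). -/
noncomputable def Tshift (L q : ℕ) : Matrix (Fin L → Fin q) (Fin L → Fin q) ℂ :=
  Matrix.of fun f g => if f = shiftIdx L q g then 1 else 0

/-- The total charge operator `N̂ = Σ_x n̂_x` for onsite number operators given by the diagonal
eigenvalue function `nhat`. -/
noncomputable def Nop (L q : ℕ) (nhat : Fin q → ℕ) :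
    Matrix (Fin L → Fin q) (Fin L → Fin q) ℂ :=
  Matrix.diagonal fun f => ((∑ x, nhat (f x) : ℕ) : ℂ)

/-- The large gauge transformation `U = exp(i (2π/L) Σ_x x n̂_x)` (site x = 1, ..., L carries
weight x). -/
noncomputable def Ugauge (L q : ℕ) (nhat : Fin q → ℕ) :
    Matrix (Fin L → Fin q) (Fin L → Fin q) ℂ :=
  Matrix.diagonal fun f =>
    Complex.exp ((2 * Real.pi / L) * Complex.I * ∑ x, ((x.val + 1 : ℕ) : ℂ) * (nhat (f x) : ℂ))

noncomputable def uval (L q : ℕ) (nhat : Fin q → ℕ) (f : Fin L → Fin q) : ℂ :=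
  Complex.exp ((2 * Real.pi / L) * Complex.I * ∑ x, ((x.val + 1 : ℕ) : ℂ) * (nhat (f x) : ℂ))

lemma Ugauge_eq (L q : ℕ) (nhat : Fin q → ℕ) :
    Ugauge L q nhat = Matrix.diagonal (uval L q nhat) := rfl

lemma finRotate_val (n : ℕ) (i : Fin (n+1)) :
    (finRotate (n+1) i).val = (i.val + 1) % (n+1) := by
  rw [finRotate_succ_apply, Fin.val_add_one]
  rcases eq_or_ne i (Fin.last n) with h | h
  · subst h; simp [Fin.last]
  · rw [if_neg h, Nat.mod_eq_of_lt]
    have hi : i.val < n := by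
      rcases Nat.lt_succ_iff_lt_or_eq.mp i.isLt with h' | h'
      · exact h'
      · exact absurd (Fin.ext h') h
    omega

lemma shiftIdx_eq_comp (n q : ℕ) (g : Fin (n+1) → Fin q) :
    shiftIdx (n+1) q g = g ∘ (finRotate (n+1)) := by
  funext i
  show g _ = g _
  congr 1
  exact Fin.ext (finRotate_val n i).symm

lemma Tshift_mulVec (n q : ℕ) (v : (Fin (n+1) → Fin q) → ℂ) (g : Fin (n+1) → Fin q) :
    (Tshift (n+1) q).mulVec v (g ∘ finRotate (n+1)) = v g := by
  have hiff : ∀ h : Fin (n+1) → Fin q,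
      (g ∘ finRotate (n+1) = shiftIdx (n+1) q h) ↔ h = g := by
    intro h
    rw [shiftIdx_eq_comp]
    constructor
    · intro he; funext i
      have := congrFun he ((finRotate (n+1)).symm i)
      simpa using this.symm
    · rintro rfl; rfl
  unfold Tshift Matrix.mulVec dotProduct
  simp only [Matrix.of_apply, hiff, ite_mul, one_mul, zero_mul]
  simp

lemma shift_weight_sum (n : ℕ) (a : Fin (n+1) → ℕ) :
    (∑ x, (x.val + 1) * a (finRotate (n+1) x)) + ∑ x, a x
      = (∑ x, (x.val + 1) * a x) + (n+1) * a 0 := by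
  have hval : ∀ x : Fin (n+1),
      x.val + 1 = (finRotate (n+1) x).val + (if x = Fin.last n then n+1 else 0) := by
    intro x
    rw [finRotate_succ_apply, Fin.val_add_one]
    rcases eq_or_ne x (Fin.last n) with h | h
    · subst h; simp [Fin.last]
    · have hx : x.val < n := by
        rcases Nat.lt_succ_iff_lt_or_eq.mp x.isLt with h' | h'
        · exact h'
        · exact absurd (Fin.ext h') h
      simp [h]
  have h1 : (∑ x, (x.val + 1) * a (finRotate (n+1) x))
      = (∑ x, (finRotate (n+1) x).val * a (finRotate (n+1) x))
        + ∑ x, (if x = Fin.last n then n+1 else 0) * a (finRotate (n+1) x) := by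
    rw [← Finset.sum_add_distrib]
    exact Finset.sum_congr rfl fun x _ => by rw [hval x, add_mul]
  rw [h1, Equiv.sum_comp (finRotate (n+1)) (fun z => z.val * a z)]
  have h2 : (∑ x, (if x = Fin.last n then n+1 else 0) * a (finRotate (n+1) x))
      = (n+1) * a 0 := by
    rw [Finset.sum_eq_single (Fin.last n)]
    · rw [if_pos rfl, finRotate_last]
    · intro b _ hb; rw [if_neg hb, zero_mul]
    · intro hmem; exact absurd (Finset.mem_univ _) hmem
  rw [h2]
  have h3 : (∑ x : Fin (n+1), (x.val + 1) * a x) = (∑ x, x.val * a x) + ∑ x, a x := by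
    rw [← Finset.sum_add_distrib]
    exact Finset.sum_congr rfl fun x _ => by ring
  rw [h3]; ring

lemma phase_shift (n q : ℕ) (nhat : Fin q → ℕ) (g : Fin (n+1) → Fin q) :
    uval (n+1) q nhat (g ∘ finRotate (n+1))
      * Complex.exp ((2 * Real.pi / ((n+1 : ℕ) : ℂ)) * Complex.I * ((∑ x, nhat (g x) : ℕ) : ℂ))
      = uval (n+1) q nhat g := by
  unfold uval
  rw [← Complex.exp_add, ← mul_add]
  have hnat := shift_weight_sum n (fun x => nhat (g x))
  have hC : (∑ x : Fin (n+1), ((x.val + 1 : ℕ) : ℂ) * (nhat ((g ∘ finRotate (n+1)) x) : ℂ))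
        + ((∑ x, nhat (g x) : ℕ) : ℂ)
      = (∑ x : Fin (n+1), ((x.val + 1 : ℕ) : ℂ) * (nhat (g x) : ℂ))
        + ((n+1 : ℕ) : ℂ) * (nhat (g 0) : ℂ) := by
    have := congrArg (Nat.cast : ℕ → ℂ) hnat
    push_cast at this ⊢
    convert this using 2
    rfl
  rw [hC, mul_add, Complex.exp_add]
  have hL0 : ((n+1 : ℕ) : ℂ) ≠ 0 := Nat.cast_ne_zero.mpr (Nat.succ_ne_zero n)
  have hexp : (2 * (Real.pi : ℂ) / ((n+1 : ℕ) : ℂ)) * Complex.I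
        * (((n+1 : ℕ) : ℂ) * (nhat (g 0) : ℂ))
      = ((nhat (g 0) : ℤ) : ℂ) * (2 * Real.pi * Complex.I) := by
    have : (2 * (Real.pi : ℂ) / ((n+1 : ℕ) : ℂ)) * Complex.I
          * (((n+1 : ℕ) : ℂ) * (nhat (g 0) : ℂ))
        = (((nhat (g 0) : ℤ) : ℂ) * (2 * Real.pi * Complex.I)) * (((n+1 : ℕ) : ℂ) / ((n+1 : ℕ) : ℂ)) := by
      push_cast
      ring
    rw [this, div_self hL0, mul_one]
  rw [hexp, Complex.exp_int_mul_two_pi_mul_I, mul_one]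

/-- U(1) × T LSM. If `Ψ` is a simultaneous eigenvector of the cyclic shift `T`
(eigenvalue `λ`) and the total charge `N̂` with eigenvalue `N` such that `N/L ∉ ℤ`, then
`UΨ` is a `T`-eigenvector with eigenvalue `e^{i2πN/L} λ`, the boost phase `e^{i2πN/L} ≠ 1`,
and `⟨Ψ, U Ψ⟩ = 0`. -/
theorem U1_LSM_momentum_boost (q L : ℕ) (hq : 1 ≤ q) (hL : 1 ≤ L) (nhat : Fin q → ℕ)
    (hrange : ∀ a, nhat a < q) (N : ℤ) (hN : ¬ ((L : ℤ) ∣ N)) (lam : ℂ)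
    (Ψ : (Fin L → Fin q) → ℂ) (hΨ : Ψ ≠ 0)
    (heigT : (Tshift L q).mulVec Ψ = lam • Ψ)
    (heigN : (Nop L q nhat).mulVec Ψ = (N : ℂ) • Ψ) :
    (Tshift L q).mulVec ((Ugauge L q nhat).mulVec Ψ) =
        (Complex.exp (2 * Real.pi * Complex.I * N / L) * lam) • (Ugauge L q nhat).mulVec Ψ ∧
      Complex.exp (2 * Real.pi * Complex.I * N / L) ≠ 1 ∧
      ∑ f, (starRingEnd ℂ) (Ψ f) * ((Ugauge L q nhat).mulVec Ψ) f = 0 := by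
  obtain ⟨n, rfl⟩ : ∃ n, L = n + 1 := ⟨L - 1, by omega⟩
  set σ := finRotate (n+1) with hσdef
  set μ : ℂ := Complex.exp (2 * Real.pi * Complex.I * N / ((n+1 : ℕ) : ℂ)) with hμdef
  have hL0 : ((n+1 : ℕ) : ℂ) ≠ 0 := Nat.cast_ne_zero.mpr (Nat.succ_ne_zero n)
  -- pointwise facts
  have hUmv : ∀ (v : (Fin (n+1) → Fin q) → ℂ) f,
      (Ugauge (n+1) q nhat).mulVec v f = uval (n+1) q nhat f * v f := by
    intro v f
    rw [Ugauge_eq, Matrix.mulVec_diagonal]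
  have hlam : ∀ g, Ψ g = lam * Ψ (g ∘ σ) := by
    intro g
    have := congrFun heigT (g ∘ σ)
    rw [Tshift_mulVec] at this
    simpa using this
  have hNf : ∀ f, Ψ f ≠ 0 → ((∑ x, nhat (f x) : ℕ) : ℂ) = (N : ℂ) := by
    intro f hf
    have := congrFun heigN f
    rw [Nop, Matrix.mulVec_diagonal] at this
    simp only [Pi.smul_apply, smul_eq_mul] at this
    exact mul_right_cancel₀ hf this
  -- the boost phase identity exp((2π/L)I N) = μ
  have hμeq : Complex.exp ((2 * Real.pi / ((n+1 : ℕ) : ℂ)) * Complex.I * (N : ℂ)) = μ := by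
    rw [hμdef]
    congr 1
    ring
  -- Part 1
  have hmain : (Tshift (n+1) q).mulVec ((Ugauge (n+1) q nhat).mulVec Ψ) =
      (μ * lam) • (Ugauge (n+1) q nhat).mulVec Ψ := by
    funext f
    have hf : f = (f ∘ σ.symm) ∘ σ := by
      funext i; simp
    set g : Fin (n+1) → Fin q := f ∘ σ.symm with hgdef
    rw [Pi.smul_apply, smul_eq_mul, hf, Tshift_mulVec, hUmv, hUmv]
    rcases eq_or_ne (Ψ g) 0 with h0 | h0
    · have h1 : lam * Ψ (g ∘ σ) = 0 := by rw [← hlam g]; exact h0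
      linear_combination uval (n+1) q nhat g * h0 - μ * uval (n+1) q nhat (g ∘ σ) * h1
    · have hSN : ((∑ x, nhat (g x) : ℕ) : ℂ) = (N : ℂ) := hNf g h0
      have hph : uval (n+1) q nhat (g ∘ σ) * μ = uval (n+1) q nhat g := by
        have := phase_shift n q nhat g
        rw [hSN, hμeq] at this
        exact this
      linear_combination (-(Ψ g)) * hph + (μ * uval (n+1) q nhat (g ∘ σ)) * (hlam g)
  -- Part 2
  have hμne : μ ≠ 1 := by
    intro h1
    rw [hμdef, Complex.exp_eq_one_iff] at h1
    obtain ⟨k, hk⟩ := h1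
    apply hN
    have h2πI : (2 * (Real.pi : ℂ) * Complex.I) ≠ 0 := by
      simp [Real.pi_ne_zero, Complex.I_ne_zero, Complex.ofReal_ne_zero]
    have hk' : 2 * (Real.pi : ℂ) * Complex.I * (N : ℂ)
        = (k : ℂ) * (2 * Real.pi * Complex.I) * ((n+1 : ℕ) : ℂ) := by
      rw [div_eq_iff hL0] at hk
      exact hk
    have hNC : (N : ℂ) = (k : ℂ) * ((n+1 : ℕ) : ℂ) := by
      apply mul_left_cancel₀ h2πI
      linear_combination hk'
    have hNZ : N = k * ((n+1 : ℕ) : ℤ) := by exact_mod_cast hNC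
    exact ⟨k, by rw [hNZ]; ring⟩
  refine ⟨hmain, hμne, ?_⟩
  -- Part 3
  have hv : ∀ g, (Ugauge (n+1) q nhat).mulVec Ψ g
      = (μ * lam) * (Ugauge (n+1) q nhat).mulVec Ψ (g ∘ σ) := by
    intro g
    have := congrFun hmain (g ∘ σ)
    rw [Tshift_mulVec] at this
    simpa using this
  set A := ∑ f, (starRingEnd ℂ) (Ψ f) * ((Ugauge (n+1) q nhat).mulVec Ψ) f with hAdef
  have hreidx : (∑ g, (starRingEnd ℂ) (Ψ (g ∘ σ)) * ((Ugauge (n+1) q nhat).mulVec Ψ) (g ∘ σ)) = A :=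
    Fintype.sum_bijective (fun g => g ∘ σ)
      ⟨fun a b hab => by
        funext i
        have := congrFun hab (σ.symm i)
        simpa using this,
       fun h => ⟨h ∘ σ.symm, by funext i; simp⟩⟩
      _ _ (fun g => rfl)
  have hsum : A = ((starRingEnd ℂ) lam * (μ * lam)) * A := by
    calc A = ∑ g, ((starRingEnd ℂ) lam * (μ * lam)) *
        ((starRingEnd ℂ) (Ψ (g ∘ σ)) * ((Ugauge (n+1) q nhat).mulVec Ψ) (g ∘ σ)) := by
          refine Finset.sum_congr rfl fun g _ => ?_
          rw [hlam g, hv g, _root_.map_mul]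
          ring
    _ = ((starRingEnd ℂ) lam * (μ * lam)) *
        ∑ g, (starRingEnd ℂ) (Ψ (g ∘ σ)) * ((Ugauge (n+1) q nhat).mulVec Ψ) (g ∘ σ) := by
          rw [Finset.mul_sum]
    _ = ((starRingEnd ℂ) lam * (μ * lam)) * A := by rw [hreidx]
  by_contra hA0
  have hK : (starRingEnd ℂ) lam * (μ * lam) = 1 := by
    have hz : ((starRingEnd ℂ) lam * (μ * lam) - 1) * A = 0 := by linear_combination -hsum
    rcases mul_eq_zero.mp hz with h | h
    · linear_combination h
    · exact absurd h hA0
  have hK' : μ * ((Complex.normSq lam : ℝ) : ℂ) = 1 := by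
    rw [← Complex.mul_conj lam]
    linear_combination hK
  have habsμ : ‖μ‖ = 1 := by
    have : 2 * (Real.pi : ℂ) * Complex.I * (N : ℂ) / ((n+1 : ℕ) : ℂ)
        = ((2 * Real.pi * (N : ℝ) / ((n+1 : ℕ) : ℝ) : ℝ) : ℂ) * Complex.I := by
      push_cast
      ring
    rw [hμdef, this, Complex.norm_exp_ofReal_mul_I]
  have hns : Complex.normSq lam = 1 := by
    have := congrArg (‖·‖) hK'
    rw [norm_mul, habsμ, one_mul, norm_one, Complex.norm_real, Real.norm_eq_abs,
      _root_.abs_of_nonneg (Complex.normSq_nonneg lam)] at this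
    exact this
  apply hμne
  rw [hns] at hK'
  simpa using hK'
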